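/- Let d ≥ 1, let g be a real polynomial in d variables homogeneous of degree n, and let ρ be a real number. Then for every x ∈ ℝ^d with x ≠ 0, Δ(‖x‖^ρ g(x)) = ρ(2n + ρ + d − 2) ‖x‖^{ρ−2} g(x) + ‖x‖^ρ (Δg)(x), where Δ = ∂_1² + ⋯ + ∂_d² is the Laplacian acting on functions on ℝ^d \ {0} and ‖·‖ is the Euclidean norm. -/

import Mathlib

open MeasureTheory MvPolynomial Metric

/-- The polynomial Laplacian `Δ = ∂₁² + ⋯ + ∂_d²` as a linear map. -/
noncomputable def polyLaplacian (d : ℕ) : MvPolynomial (Fin d) ℝ →ₗ[ℝ] MvPolynomial (Fin d) ℝ :=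
  ∑ i : Fin d, ((pderiv i).toLinearMap ∘ₗ (pderiv i).toLinearMap)

/-- The Laplacian `Δ = ∂₁² + ⋯ + ∂_d²` of a function on `ℝ^d`, written with
iterated (Fréchet) derivatives in the coordinate directions. -/
noncomputable def fnLaplacian {d : ℕ} (f : EuclideanSpace ℝ (Fin d) → ℝ)
    (x : EuclideanSpace ℝ (Fin d)) : ℝ :=
  ∑ i : Fin d,
    fderiv ℝ (fun y => fderiv ℝ f y (EuclideanSpace.single i 1)) x (EuclideanSpace.single i 1)

section Aux

variable {d n : ℕ}

noncomputable def evalD (p : MvPolynomial (Fin d) ℝ) (y : EuclideanSpace ℝ (Fin d)) :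
    EuclideanSpace ℝ (Fin d) →L[ℝ] ℝ :=
  ∑ i : Fin d, eval (fun j => y j) (pderiv i p) •
    (EuclideanSpace.proj i : EuclideanSpace ℝ (Fin d) →L[ℝ] ℝ)

lemma evalD_apply (p : MvPolynomial (Fin d) ℝ) (y v : EuclideanSpace ℝ (Fin d)) :
    evalD p y v = ∑ i : Fin d, eval (fun j => y j) (pderiv i p) * v i := by
  simp [evalD, PiLp.proj_apply]

lemma hasFDerivAt_evalPoly (p : MvPolynomial (Fin d) ℝ) (y : EuclideanSpace ℝ (Fin d)) :
    HasFDerivAt (fun z : EuclideanSpace ℝ (Fin d) => eval (fun j => z j) p) (evalD p y) y := by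
  induction p using MvPolynomial.induction_on with
  | C a =>
      have h : evalD (C a : MvPolynomial (Fin d) ℝ) y = 0 := by
        ext v; simp [evalD_apply, pderiv_C]
      rw [h]
      simpa using hasFDerivAt_const
        (eval (fun j => (0:EuclideanSpace ℝ (Fin d)) j) (C a : MvPolynomial (Fin d) ℝ)) y
  | add p q hp hq =>
      have h : evalD (p + q) y = evalD p y + evalD q y := by
        ext v; simp [evalD_apply, Finset.sum_add_distrib, add_mul]
      rw [h]; simp only [map_add]; exact hp.add hq
  | mul_X p j hp =>
      have hX : HasFDerivAt (fun z : EuclideanSpace ℝ (Fin d) => z j)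
          (EuclideanSpace.proj j : EuclideanSpace ℝ (Fin d) →L[ℝ] ℝ) y :=
        PiLp.hasFDerivAt_apply 2 y j
      have hmul := hp.mul hX
      have heq : evalD (p * X j) y =
          eval (fun k => y k) p • (EuclideanSpace.proj j : EuclideanSpace ℝ (Fin d) →L[ℝ] ℝ)
            + y j • evalD p y := by
        ext v
        rw [evalD_apply]
        have key : ∀ i : Fin d, eval (fun k => y k) (pderiv i (p * X j)) * v i =
            y j * (eval (fun k => y k) (pderiv i p) * v i)
              + (if i = j then eval (fun k => y k) p * v i else 0) := by
          intro i
          rcases eq_or_ne i j with rfl | hij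
          · simp [pderiv_mul]; ring
          · simp [pderiv_mul, pderiv_X_of_ne (Ne.symm hij), hij]; ring
        rw [Finset.sum_congr rfl (fun i _ => key i), Finset.sum_add_distrib,
          Finset.sum_ite_eq' Finset.univ j]
        simp [evalD_apply, Finset.mul_sum, PiLp.proj_apply, add_comm]
      rw [heq]
      have hf : (fun z : EuclideanSpace ℝ (Fin d) => eval (fun k => z k) (p * X j))
          = (fun z => eval (fun k => z k) p) * (fun z => z j) := by
        funext z; simp [eval_X]
      rw [hf]; exact hmul

lemma euler_monomial (m : Fin d →₀ ℕ) (c : ℝ) :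
    ∑ i : Fin d, X i * pderiv i (monomial m c) = (∑ i : Fin d, m i) • monomial m c := by
  have key : ∀ i : Fin d, X i * pderiv i (monomial m c) = (m i) • monomial m c := by
    intro i
    rw [pderiv_monomial]
    rcases Nat.eq_zero_or_pos (m i) with h0 | hpos
    · simp [h0]
    · rw [X, monomial_mul, one_mul]
      have h : Finsupp.single i 1 + (m - Finsupp.single i 1) = m := by
        ext j
        rcases eq_or_ne j i with rfl | hji
        · simp [Finsupp.single_apply, Finsupp.tsub_apply]; omega
        · simp [Finsupp.single_apply, Finsupp.tsub_apply, hji.symm, Ne.symm hji]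
      rw [h, smul_monomial]
      congr 1
      simp [nsmul_eq_mul, mul_comm]
  rw [Finset.sum_congr rfl fun i _ => key i, ← Finset.sum_smul]

lemma euler (g : MvPolynomial (Fin d) ℝ) (hg : g.IsHomogeneous n) :
    ∑ i : Fin d, X i * pderiv i g = n • g := by
  conv_lhs => rw [g.as_sum]
  conv_rhs => rw [g.as_sum]
  simp only [map_sum, Finset.mul_sum, Finset.smul_sum]
  rw [Finset.sum_comm]
  refine Finset.sum_congr rfl fun m hm => ?_
  rw [euler_monomial]
  congr 1
  have hc := hg (MvPolynomial.mem_support_iff.mp hm)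
  rw [← hc, Finsupp.weight_apply, Finsupp.sum_fintype]
  · simp
  · intro i; simp

lemma norm_sq_rpow (y : EuclideanSpace ℝ (Fin d)) (t : ℝ) :
    (‖y‖ ^ 2) ^ t = ‖y‖ ^ (2 * t) := by
  rw [← Real.rpow_natCast (‖y‖) 2, ← Real.rpow_mul (norm_nonneg y)]
  push_cast
  ring_nf

lemma myHasFDerivAt_norm_rpow (σ : ℝ) {y : EuclideanSpace ℝ (Fin d)} (hy : y ≠ 0) :
    HasFDerivAt (fun z : EuclideanSpace ℝ (Fin d) => ‖z‖ ^ σ)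
      ((σ * ‖y‖ ^ (σ - 2)) • (innerSL ℝ y)) y := by
  have hny : ‖y‖ ≠ 0 := norm_ne_zero_iff.mpr hy
  have hsq : HasFDerivAt (fun z : EuclideanSpace ℝ (Fin d) => ‖z‖ ^ 2)
      (2 • (innerSL ℝ y)) y := (hasStrictFDerivAt_norm_sq y).hasFDerivAt
  have hr : HasDerivAt (fun t : ℝ => t ^ (σ/2)) ((σ/2) * (‖y‖^2) ^ (σ/2 - 1)) (‖y‖^2) :=
    Real.hasDerivAt_rpow_const (Or.inl (by positivity))
  have hcomp := hr.comp_hasFDerivAt y hsq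
  have hfun : (fun t : ℝ => t ^ (σ/2)) ∘ (fun z : EuclideanSpace ℝ (Fin d) => ‖z‖^2)
      = fun z : EuclideanSpace ℝ (Fin d) => ‖z‖ ^ σ := by
    funext z
    simp only [Function.comp_apply]
    rw [norm_sq_rpow]
    congr 1
    ring
  have hmap : ((σ/2) * (‖y‖^2) ^ (σ/2 - 1)) • (2 • (innerSL ℝ y))
      = (σ * ‖y‖ ^ (σ - 2)) • (innerSL ℝ y) := by
    ext v
    simp only [two_smul, ContinuousLinearMap.add_apply, ContinuousLinearMap.coe_smul',
      Pi.smul_apply, smul_eq_mul]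
    rw [norm_sq_rpow]
    ring_nf
  rw [hfun, hmap] at hcomp
  exact hcomp

noncomputable def FD (σ : ℝ) (p : MvPolynomial (Fin d) ℝ) (y : EuclideanSpace ℝ (Fin d)) :
    EuclideanSpace ℝ (Fin d) →L[ℝ] ℝ :=
  ‖y‖ ^ σ • evalD p y + (eval (fun i => y i) p * (σ * ‖y‖ ^ (σ - 2))) • (innerSL ℝ y)

lemma hasFDerivAt_M (σ : ℝ) (p : MvPolynomial (Fin d) ℝ) {y : EuclideanSpace ℝ (Fin d)}
    (hy : y ≠ 0) :
    HasFDerivAt (fun z : EuclideanSpace ℝ (Fin d) => ‖z‖ ^ σ * eval (fun i => z i) p)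
      (FD σ p y) y := by
  have h := (myHasFDerivAt_norm_rpow σ hy).mul (hasFDerivAt_evalPoly p y)
  exact h.congr_fderiv (by rw [FD, smul_smul])

lemma FD_single (σ : ℝ) (p : MvPolynomial (Fin d) ℝ) (y : EuclideanSpace ℝ (Fin d)) (j : Fin d) :
    FD σ p y (EuclideanSpace.single j 1) =
      ‖y‖ ^ σ * eval (fun i => y i) (pderiv j p)
        + eval (fun i => y i) p * (σ * ‖y‖ ^ (σ - 2)) * y j := by
  have h1 : evalD p y (EuclideanSpace.single j 1) = eval (fun i => y i) (pderiv j p) := by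
    rw [evalD_apply, Finset.sum_eq_single j]
    · simp [EuclideanSpace.single_apply]
    · intro i _ hij; simp [EuclideanSpace.single_apply, hij]
    · simp
  have h2 : innerSL ℝ y (EuclideanSpace.single j 1) = y j := by
    simp [EuclideanSpace.inner_single_right]
  simp [FD, h1, h2]

end Aux

/-- `Δ(‖x‖^ρ g(x)) = ρ(2n + ρ + d − 2)‖x‖^{ρ−2} g(x) + ‖x‖^ρ (Δg)(x)` for `g` homogeneous of
degree `n` and `x ≠ 0`. -/
theorem laplacian_rpow_mul_homogeneous (d n : ℕ) (hd : 1 ≤ d) (ρ : ℝ)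
    (g : MvPolynomial (Fin d) ℝ) (hg : g.IsHomogeneous n)
    (x : EuclideanSpace ℝ (Fin d)) (hx : x ≠ 0) :
    fnLaplacian (fun y => ‖y‖ ^ ρ * MvPolynomial.eval (fun i => y i) g) x =
      ρ * (2 * n + ρ + d - 2) * ‖x‖ ^ (ρ - 2) * MvPolynomial.eval (fun i => x i) g +
        ‖x‖ ^ ρ * MvPolynomial.eval (fun i => x i) (polyLaplacian d g) := by
  classical
  have hnx : ‖x‖ ≠ 0 := norm_ne_zero_iff.mpr hx
  have key : ∀ j : Fin d,
      fderiv ℝ (fun y => fderiv ℝ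
          (fun z : EuclideanSpace ℝ (Fin d) => ‖z‖ ^ ρ * eval (fun i => z i) g) y
          (EuclideanSpace.single j 1)) x (EuclideanSpace.single j 1)
        = (FD ρ (pderiv j g) x + ρ • FD (ρ - 2) (X j * g) x) (EuclideanSpace.single j 1) := by
    intro j
    have hev : (fun y => fderiv ℝ
          (fun z : EuclideanSpace ℝ (Fin d) => ‖z‖ ^ ρ * eval (fun i => z i) g) y
          (EuclideanSpace.single j 1))
        =ᶠ[nhds x] (fun y => ‖y‖ ^ ρ * eval (fun i => y i) (pderiv j g)
          + ρ * (‖y‖ ^ (ρ - 2) * eval (fun i => y i) (X j * g))) := by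
      filter_upwards [compl_singleton_mem_nhds hx] with y hy
      have hy' : y ≠ 0 := hy
      rw [(hasFDerivAt_M ρ g hy').fderiv, FD_single]
      rw [eval_mul, eval_X]
      ring
    rw [hev.fderiv_eq]
    exact congrArg (fun L => L (EuclideanSpace.single j 1)) ((hasFDerivAt_M ρ (pderiv j g) hx).add
      ((hasFDerivAt_M (ρ - 2) (X j * g) hx).const_mul ρ)).fderiv
  rw [fnLaplacian]
  rw [Finset.sum_congr rfl fun j _ => key j]
  simp only [ContinuousLinearMap.add_apply, ContinuousLinearMap.coe_smul', Pi.smul_apply,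
    smul_eq_mul, FD_single]
  have h1 : ∀ j : Fin d, eval (fun i => x i) (pderiv j (X j * g))
      = eval (fun i => x i) g + x j * eval (fun i => x i) (pderiv j g) := by
    intro j
    rw [pderiv_mul, pderiv_X_self]
    simp
  have h2 : ∀ j : Fin d, eval (fun i => x i) (X j * g) = x j * eval (fun i => x i) g := by
    intro j; simp
  have hEuler : ∑ j : Fin d, x j * eval (fun i => x i) (pderiv j g)
      = n * eval (fun i => x i) g := by
    have h := congrArg (eval (fun i => x i)) (euler g hg)
    simpa [eval_mul, nsmul_eq_mul] using h
  have hsq : ∑ j : Fin d, x j * x j = ‖x‖ ^ 2 := by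
    rw [EuclideanSpace.norm_eq, Real.sq_sqrt (Finset.sum_nonneg fun i _ => by positivity)]
    simp only [Real.norm_eq_abs, sq_abs, sq, abs_mul_abs_self]
  have hlap : ∑ j : Fin d, eval (fun i => x i) (pderiv j (pderiv j g))
      = eval (fun i => x i) (polyLaplacian d g) := by
    rw [polyLaplacian]
    simp [LinearMap.sum_apply, map_sum]
  have hBC : ‖x‖ ^ 2 * ‖x‖ ^ (ρ - 2 - 2) = ‖x‖ ^ (ρ - 2) := by
    rw [← Real.rpow_natCast (‖x‖) 2, ← Real.rpow_add (lt_of_le_of_ne (norm_nonneg x) (Ne.symm hnx))]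
    congr 1
    push_cast
    ring
  have expand : ∀ j : Fin d,
      ‖x‖ ^ ρ * eval (fun i => x i) (pderiv j (pderiv j g))
          + eval (fun i => x i) (pderiv j g) * (ρ * ‖x‖ ^ (ρ - 2)) * x j
          + ρ * (‖x‖ ^ (ρ - 2) * eval (fun i => x i) (pderiv j (X j * g))
            + eval (fun i => x i) (X j * g) * ((ρ - 2) * ‖x‖ ^ (ρ - 2 - 2)) * x j)
      = ‖x‖ ^ ρ * eval (fun i => x i) (pderiv j (pderiv j g))
          + (ρ * ‖x‖ ^ (ρ - 2)) * (x j * eval (fun i => x i) (pderiv j g))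
          + (ρ * ‖x‖ ^ (ρ - 2) * eval (fun i => x i) g)
          + (ρ * ‖x‖ ^ (ρ - 2)) * (x j * eval (fun i => x i) (pderiv j g))
          + (ρ * (ρ - 2) * ‖x‖ ^ (ρ - 2 - 2) * eval (fun i => x i) g) * (x j * x j) := by
    intro j
    rw [h1 j, h2 j]
    ring
  rw [Finset.sum_congr rfl fun j _ => expand j]
  simp only [Finset.sum_add_distrib, ← Finset.mul_sum, Finset.sum_const, Finset.card_univ,
    Fintype.card_fin, nsmul_eq_mul]
  rw [hEuler, hsq, hlap]
  linear_combination (ρ * (ρ - 2) * eval (fun i => x i) g) * hBC
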